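/- Let x_1 ≥ x_2 ≥ … ≥ x_n > 0 and y_1,…,y_n ≥ 0 be real numbers such that for every 2 ≤ m ≤ n one has x_m + x_{m+1} + … + x_n ≥ y_m + y_{m+1} + … + y_n, and x_1 + … + x_n = y_1 + … + y_n. Then Σ_{1≤i<j≤n} x_i x_j ≥ Σ_{1≤i<j≤n} y_i y_j, with equality if and only if y_i = x_i for every 1 ≤ i ≤ n. -/

import Mathlib

lemma pair_id (n : ℕ) (f : Fin n → ℝ) :
    2 * ∑ p ∈ Finset.univ.filter (fun p : Fin n × Fin n => p.1 < p.2), f p.1 * f p.2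
      = (∑ i, f i)^2 - ∑ i, (f i)^2 := by
  have h1 : (∑ i, f i)^2 = ∑ p : Fin n × Fin n, f p.1 * f p.2 := by
    rw [sq, Finset.sum_mul_sum, Fintype.sum_prod_type]
  have h2 := Finset.sum_filter_add_sum_filter_not Finset.univ
      (fun p : Fin n × Fin n => p.1 < p.2) (fun p => f p.1 * f p.2)
  have h3 : Finset.univ.filter (fun p : Fin n × Fin n => ¬ p.1 < p.2)
      = Finset.univ.filter (fun p : Fin n × Fin n => p.2 < p.1) ∪
        Finset.univ.filter (fun p : Fin n × Fin n => p.1 = p.2) := by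
    ext p; simp [Finset.mem_filter, Finset.mem_union]
    omega
  have h4 : ∑ p ∈ Finset.univ.filter (fun p : Fin n × Fin n => ¬ p.1 < p.2), f p.1 * f p.2
      = ∑ p ∈ Finset.univ.filter (fun p : Fin n × Fin n => p.2 < p.1), f p.1 * f p.2
        + ∑ p ∈ Finset.univ.filter (fun p : Fin n × Fin n => p.1 = p.2), f p.1 * f p.2 := by
    rw [h3, Finset.sum_union]
    rintro s hs1 hs2 p hp
    have := hs1 hp; have := hs2 hp
    simp_all only [Finset.mem_filter, Finset.mem_univ, true_and]
    omega
  have h5 : ∑ p ∈ Finset.univ.filter (fun p : Fin n × Fin n => p.2 < p.1), f p.1 * f p.2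
      = ∑ p ∈ Finset.univ.filter (fun p : Fin n × Fin n => p.1 < p.2), f p.1 * f p.2 := by
    apply Finset.sum_nbij' (fun p => Prod.swap p) (fun p => Prod.swap p) <;>
      simp [mul_comm]
  have h6 : ∑ p ∈ Finset.univ.filter (fun p : Fin n × Fin n => p.1 = p.2), f p.1 * f p.2
      = ∑ i, (f i)^2 := by
    rw [Finset.sum_filter]
    rw [Fintype.sum_prod_type]
    simp [Finset.sum_ite_eq', sq]
  rw [h1, ← h2, h4, h5, h6]; ring

lemma abel_nonneg (n : ℕ) (x y : Fin n → ℝ)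
    (hxanti : ∀ i j : Fin n, i ≤ j → x j ≤ x i)
    (htail : ∀ m : ℕ, 1 ≤ m → m ≤ n - 1 →
      ∑ i ∈ Finset.univ.filter (fun i : Fin n => m ≤ (i : ℕ)), y i ≤
        ∑ i ∈ Finset.univ.filter (fun i : Fin n => m ≤ (i : ℕ)), x i)
    (hsum : ∑ i, x i = ∑ i, y i) :
    0 ≤ ∑ i, x i * (y i - x i) := by
  rcases Nat.eq_zero_or_pos n with hn | hn
  · subst hn; simp
  set X : ℕ → ℝ := fun k => if h : k < n then x ⟨k, h⟩ else 0 with hX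
  set D : ℕ → ℝ := fun k => if h : k < n then y ⟨k, h⟩ - x ⟨k, h⟩ else 0 with hD
  have hext : ∀ (f : Fin n → ℝ) (F : ℕ → ℝ), (∀ i : Fin n, F i = f i) →
      ∀ m : ℕ, ∑ i ∈ Finset.univ.filter (fun i : Fin n => m ≤ (i : ℕ)), f i
        = ∑ i ∈ Finset.Ico m n, F i := by
    intro f F hF m
    have : Finset.Ico m n = (Finset.range n).filter (fun i => m ≤ i) := by
      ext a; simp [Finset.mem_Ico]; omega
    rw [this, Finset.sum_filter, Finset.sum_filter,
      ← Fin.sum_univ_eq_sum_range (fun k => if m ≤ k then F k else 0) n]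
    exact Finset.sum_congr rfl fun i _ => by by_cases h : m ≤ (i : ℕ) <;> simp [h, hF i]
  have hDtot : ∑ i ∈ Finset.range n, D i = 0 := by
    rw [← Fin.sum_univ_eq_sum_range D n]
    have : ∀ i : Fin n, D i = y i - x i := fun i => by simp [hD, i.isLt]
    simp only [this, Finset.sum_sub_distrib, hsum, sub_self]
  have hhead : ∀ m : ℕ, 1 ≤ m → m ≤ n - 1 → 0 ≤ ∑ j ∈ Finset.range m, D j := by
    intro m h1 h2
    have hmn : m ≤ n := by omega
    have hsplit : ∑ j ∈ Finset.range m, D j + ∑ j ∈ Finset.Ico m n, D j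
        = ∑ j ∈ Finset.range n, D j := by
      simp only [Finset.range_eq_Ico]
      exact Finset.sum_Ico_consecutive D (Nat.zero_le m) hmn
    have hIcoD : ∑ j ∈ Finset.Ico m n, D j ≤ 0 := by
      have hy' := hext y (fun k => if h : k < n then y ⟨k, h⟩ else 0) (fun i => by simp [i.isLt]) m
      have hx' := hext x X (fun i => by simp [hX, i.isLt]) m
      have : ∑ j ∈ Finset.Ico m n, D j
          = ∑ j ∈ Finset.Ico m n, (fun k => if h : k < n then y ⟨k, h⟩ else 0) j
            - ∑ j ∈ Finset.Ico m n, X j := by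
        rw [← Finset.sum_sub_distrib]
        refine Finset.sum_congr rfl fun j hj => ?_
        have : j < n := (Finset.mem_Ico.mp hj).2
        simp [hD, hX, this]
      rw [this, ← hy', ← hx']
      have := htail m h1 h2
      linarith
    linarith [hsplit, hDtot]
  have habel := Finset.sum_range_by_parts X D n
  have hXDfin : ∑ i : Fin n, x i * (y i - x i) = ∑ i ∈ Finset.range n, X i • D i := by
    rw [← Fin.sum_univ_eq_sum_range (fun k => X k • D k) n]
    exact Finset.sum_congr rfl fun i _ => by simp [hX, hD, i.isLt]
  rw [hXDfin, habel, hDtot, smul_zero, zero_sub, le_neg, neg_zero]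
  apply Finset.sum_nonpos
  intro i hi
  have hi' : i < n - 1 := Finset.mem_range.mp hi
  have h1 : i < n := by omega
  have h2 : i + 1 < n := by omega
  have hxle : X (i + 1) ≤ X i := by
    simp only [hX, dif_pos h1, dif_pos h2]
    exact hxanti ⟨i, h1⟩ ⟨i + 1, h2⟩ (by simp)
  have hS : 0 ≤ ∑ j ∈ Finset.range (i + 1), D j := hhead (i + 1) (by omega) (by omega)
  have : (X (i + 1) - X i) ≤ 0 := by linarith
  simpa [smul_eq_mul] using mul_nonpos_of_nonpos_of_nonneg this hS

/-- Let `x_1 ≥ … ≥ x_n > 0` and `y_1,…,y_n ≥ 0` be reals such that every proper tail sum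
of `x` dominates the corresponding tail sum of `y` (for `2 ≤ m ≤ n`), while the full sums
are equal. Then `Σ_{i<j} x_i x_j ≥ Σ_{i<j} y_i y_j`, with equality iff `y = x`. -/
theorem stmt12 (n : ℕ) (x y : Fin n → ℝ)
    (hxanti : ∀ i j : Fin n, i ≤ j → x j ≤ x i) (hxpos : ∀ i, 0 < x i)
    (hy : ∀ i, 0 ≤ y i)
    (htail : ∀ m : ℕ, 1 ≤ m → m ≤ n - 1 →
      ∑ i ∈ Finset.univ.filter (fun i : Fin n => m ≤ (i : ℕ)), y i ≤
        ∑ i ∈ Finset.univ.filter (fun i : Fin n => m ≤ (i : ℕ)), x i)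
    (hsum : ∑ i, x i = ∑ i, y i) :
    ∑ p ∈ Finset.univ.filter (fun p : Fin n × Fin n => p.1 < p.2), y p.1 * y p.2 ≤
      ∑ p ∈ Finset.univ.filter (fun p : Fin n × Fin n => p.1 < p.2), x p.1 * x p.2 ∧
    (∑ p ∈ Finset.univ.filter (fun p : Fin n × Fin n => p.1 < p.2), x p.1 * x p.2 =
        ∑ p ∈ Finset.univ.filter (fun p : Fin n × Fin n => p.1 < p.2), y p.1 * y p.2 ↔
      ∀ i, y i = x i) := by
  have hx := pair_id n x
  have hyid := pair_id n y
  have key : ∑ i, (y i)^2 - ∑ i, (x i)^2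
      = ∑ i, (y i - x i)^2 + 2 * ∑ i, x i * (y i - x i) := by
    rw [← Finset.sum_sub_distrib, Finset.mul_sum, ← Finset.sum_add_distrib]
    exact Finset.sum_congr rfl fun i _ => by ring
  have hA := abel_nonneg n x y hxanti htail hsum
  have hB : (0:ℝ) ≤ ∑ i, (y i - x i)^2 := Finset.sum_nonneg fun i _ => sq_nonneg _
  have hle : ∑ p ∈ Finset.univ.filter (fun p : Fin n × Fin n => p.1 < p.2), y p.1 * y p.2 ≤
      ∑ p ∈ Finset.univ.filter (fun p : Fin n × Fin n => p.1 < p.2), x p.1 * x p.2 := by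
    rw [hsum] at hx
    nlinarith [hx, hyid, key, hA, hB]
  refine ⟨hle, ?_, ?_⟩
  · intro h
    have hsq : ∑ i, (y i - x i)^2 = 0 := by
      rw [hsum] at hx
      nlinarith [hx, hyid, key, hA, hB]
    intro i
    have := (Finset.sum_eq_zero_iff_of_nonneg (fun i _ => sq_nonneg (y i - x i))).mp hsq
      i (Finset.mem_univ i)
    have := pow_eq_zero_iff (n := 2) (by norm_num) |>.mp this
    linarith [this]
  · intro h
    exact (Finset.sum_congr rfl fun p _ => by rw [h p.1, h p.2]).symm
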